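/- arXiv:1102.4859 — 2 statements merged into one kernel-verified Lean document; each statement's English description precedes it below -/
import Mathlib

section
/- In a sum of hermitian squares of noncommutative polynomials, the highest degree terms cannot cancel: if p = Σ_{j=1}^m g_j* g_j for noncommutative polynomials g_j ∈ ℝ⟨x⟩ and deg(p) ≤ 2k, then each g_j has degree at most k. -/
open scoped Matrix BigOperators
noncomputable section

/-- Free noncommutative polynomials in `g` symmetric variables with real coefficients. -/
abbrev NCPoly (g : ℕ) := MonoidAlgebra ℝ (FreeMonoid (Fin g))

namespace NCPoly

variable {g : ℕ}

/-- Reverse a word (the involution on the free monoid). -/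
def wordStar (w : FreeMonoid (Fin g)) : FreeMonoid (Fin g) :=
  FreeMonoid.ofList (FreeMonoid.toList w).reverse

/-- The involution `*` on `ℝ⟨x⟩`, fixing the variables and reversing words. -/
def adj (p : NCPoly g) : NCPoly g := MonoidAlgebra.mapDomain wordStar p

/-- Degree of a noncommutative polynomial. -/
def deg (p : NCPoly g) : ℕ := p.coeff.support.sup fun w => (FreeMonoid.toList w).length

/-- The variable `x_i`. -/
def X (i : Fin g) : NCPoly g := MonoidAlgebra.single (FreeMonoid.of i) 1

/-- Evaluation of `p` at a `g`-tuple of `n × n` real matrices. -/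
def eval {n : ℕ} (X : Fin g → Matrix (Fin n) (Fin n) ℝ) (p : NCPoly g) :
    Matrix (Fin n) (Fin n) ℝ :=
  (MonoidAlgebra.lift ℝ (Matrix (Fin n) (Fin n) ℝ) (FreeMonoid (Fin g)))
    (FreeMonoid.lift X) p

/-- `p` is homogeneous of degree `m`. -/
def Homog (m : ℕ) (p : NCPoly g) : Prop :=
  ∀ w ∈ p.coeff.support, (FreeMonoid.toList w).length = m

end NCPoly

/-- Matrix-valued noncommutative polynomials. -/
abbrev MatPoly (g : ℕ) (I J : Type*) := Matrix I J (NCPoly g)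

namespace MatPoly

variable {g : ℕ}

/-- The involution on matrix polynomials: transpose and star entrywise. -/
def adj {I J : Type*} (P : MatPoly g I J) : MatPoly g J I := fun i j => NCPoly.adj (P j i)

/-- Degree of a matrix polynomial. -/
def deg {I J : Type*} [Fintype I] [Fintype J] (P : MatPoly g I J) : ℕ :=
  Finset.univ.sup fun p : I × J => NCPoly.deg (P p.1 p.2)

/-- Entrywise (Kronecker) evaluation at a tuple of symmetric `n × n` matrices. -/
def eval {I J : Type*} {n : ℕ} (X : Fin g → Matrix (Fin n) (Fin n) ℝ)
    (P : MatPoly g I J) : Matrix (I × Fin n) (J × Fin n) ℝ :=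
  fun ik jl => NCPoly.eval X (P ik.1 jl.1) ik.2 jl.2

/-- `P` is symmetric: `P* = P`. -/
def IsSymmP {I : Type*} (P : MatPoly g I I) : Prop := adj P = P

/-- The monic linear pencil `I - Σ A_j x_j`. -/
def pencil {ℓ : ℕ} (A : Fin g → Matrix (Fin ℓ) (Fin ℓ) ℝ) : MatPoly g (Fin ℓ) (Fin ℓ) :=
  (1 : Matrix (Fin ℓ) (Fin ℓ) (NCPoly g)) -
    ∑ j : Fin g, (A j).map (fun c => MonoidAlgebra.single (FreeMonoid.of j) c)

/-- A tuple of matrices is symmetric. -/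
def SymTuple {n : ℕ} (X : Fin g → Matrix (Fin n) (Fin n) ℝ) : Prop := ∀ j, (X j).IsSymm

/-- Membership in the nc semialgebraic set `𝔓_q` at level `n`. -/
def InP {I : Type*} [Fintype I] (q : MatPoly g I I) {n : ℕ}
    (X : Fin g → Matrix (Fin n) (Fin n) ℝ) : Prop :=
  SymTuple X ∧ (eval X q).PosSemidef

/-- `p` is a sum of hermitian squares of degree at most `α`. -/
def InSigma {ν : ℕ} (α : ℕ) (p : MatPoly g (Fin ν) (Fin ν)) : Prop :=
  ∃ (m : ℕ) (v : Fin m → Fin ν → NCPoly g),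
    (∀ k i, NCPoly.deg (v k i) ≤ α) ∧
    p = fun i j => ∑ k, NCPoly.adj (v k i) * v k j

/-- Membership in the truncated quadratic module `M^ν_{α,β}(q)`. -/
def InM {ℓ ν : ℕ} (α β : ℕ) (q : MatPoly g (Fin ℓ) (Fin ℓ))
    (p : MatPoly g (Fin ν) (Fin ν)) : Prop :=
  ∃ (σ : MatPoly g (Fin ν) (Fin ν)) (m : ℕ)
    (f : Fin m → MatPoly g (Fin ℓ) (Fin ν)),
    InSigma α σ ∧ (∀ k, deg (f k) ≤ β) ∧
    p = σ + ∑ k, adj (f k) * q * f k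

end MatPoly

/-- `σ_#(k) = dim ℝ⟨x⟩_k`. -/
def sigmaSharp (g k : ℕ) : ℕ := ∑ j ∈ Finset.range (k + 1), g ^ j



namespace NCPoly

lemma wordStar_wordStar {g : ℕ} (w : FreeMonoid (Fin g)) : wordStar (wordStar w) = w := by
  simp [wordStar]

lemma wordStar_injective {g : ℕ} : Function.Injective (wordStar (g := g)) :=
  Function.LeftInverse.injective wordStar_wordStar

lemma adj_apply {g : ℕ} (a : NCPoly g) (w : FreeMonoid (Fin g)) :
    (adj a).coeff w = a.coeff (wordStar w) := by
  conv_lhs => rw [adj, ← wordStar_wordStar w]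
  exact Finsupp.mapDomain_apply wordStar_injective _ _

lemma length_wordStar {g : ℕ} (w : FreeMonoid (Fin g)) :
    (FreeMonoid.toList (wordStar w)).length = (FreeMonoid.toList w).length := by
  simp [wordStar]

lemma key {g D : ℕ} (a : NCPoly g) (ha : deg a ≤ D)
    (w : FreeMonoid (Fin g)) (hw : (FreeMonoid.toList w).length = D) :
    (adj a * a).coeff (wordStar w * w) = (a.coeff w) ^ 2 := by
  classical
  have hlen : ∀ s ∈ a.coeff.support, (FreeMonoid.toList s).length ≤ D := fun s hs =>
    le_trans (Finset.le_sup (f := fun w => (FreeMonoid.toList w).length) hs) ha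
  rw [MonoidAlgebra.coeff_mul]
  unfold Finsupp.sum
  rw [Finset.sum_eq_single (wordStar w)]
  · beta_reduce
    rw [Finset.sum_eq_single w]
    · beta_reduce
      rw [if_pos rfl, adj_apply, wordStar_wordStar, sq]
    · intro t ht hne
      beta_reduce
      rw [if_neg]
      intro hz
      -- from `wordStar w * t = wordStar w * w` deduce `t = w`
      exact hne (mul_left_cancel hz)
    · intro hne
      beta_reduce
      rw [Finsupp.notMem_support_iff.mp hne, mul_zero, if_pos rfl]
  · intro s hs hne
    -- show inner sum is 0
    beta_reduce
    apply Finset.sum_eq_zero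
    intro t ht
    beta_reduce
    rw [if_neg]
    intro hz
    apply hne
    -- length analysis
    have hs' : (FreeMonoid.toList s).length ≤ D := by
      have : s ∈ (a.coeff.support.image wordStar) := by
        exact Finsupp.mapDomain_support hs
      obtain ⟨u, hu, rfl⟩ := Finset.mem_image.mp this
      rw [length_wordStar]; exact hlen u hu
    have ht' : (FreeMonoid.toList t).length ≤ D := hlen t ht
    have hzlen : (FreeMonoid.toList s).length + (FreeMonoid.toList t).length = D + D := by
      have := congrArg (fun z => (FreeMonoid.toList z).length) hz
      simpa [FreeMonoid.toList_mul, length_wordStar, hw] using this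
    have hsD : (FreeMonoid.toList s).length = D := by omega
    have := congrArg FreeMonoid.toList hz
    rw [FreeMonoid.toList_mul, FreeMonoid.toList_mul] at this
    have := List.append_inj_left this (by rw [hsD, length_wordStar, hw])
    exact FreeMonoid.toList.injective this
  · intro hne
    beta_reduce
    apply Finset.sum_eq_zero
    intro t ht
    simp only [ite_eq_right_iff, mul_eq_zero]
    exact fun _ => Or.inl (Finsupp.notMem_support_iff.mp hne)

end NCPoly

/-- in a sum of hermitian squares the highest degree terms cannot
cancel: if `p = Σ g_j* g_j` and `deg p ≤ 2k` then each `deg g_j ≤ k`. -/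
theorem stmt1 {g k m : ℕ} (p : NCPoly g) (gs : Fin m → NCPoly g)
    (hrep : p = ∑ j, NCPoly.adj (gs j) * gs j)
    (hdeg : NCPoly.deg p ≤ 2 * k) :
    ∀ j, NCPoly.deg (gs j) ≤ k := by
  intro j
  by_contra hko
  push_neg at hko
  set D := Finset.univ.sup fun i => NCPoly.deg (gs i) with hD
  have hkD : k < D := lt_of_lt_of_le hko (Finset.le_sup (f := fun i => NCPoly.deg (gs i)) (Finset.mem_univ j))
  obtain ⟨j0, -, hj0⟩ := Finset.exists_mem_eq_sup Finset.univ ⟨j, Finset.mem_univ j⟩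
    (fun i => NCPoly.deg (gs i))
  have hsne : (gs j0).coeff.support.Nonempty := by
    rcases Finset.eq_empty_or_nonempty (gs j0).coeff.support with h | h
    · exfalso
      have : NCPoly.deg (gs j0) = 0 := by rw [NCPoly.deg, h]; simp
      omega
    · exact h
  obtain ⟨w, hw, hwlen⟩ := Finset.exists_mem_eq_sup (gs j0).coeff.support hsne
    (fun w => (FreeMonoid.toList w).length)
  have hwD : (FreeMonoid.toList w).length = D := by
    rw [← hwlen]; exact hj0.symm
  have hkey : p.coeff (NCPoly.wordStar w * w) = ∑ i, ((gs i).coeff w) ^ 2 := by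
    rw [hrep, MonoidAlgebra.coeff_sum, Finsupp.finset_sum_apply]
    exact Finset.sum_congr rfl fun i _ =>
      NCPoly.key (gs i) (Finset.le_sup (f := fun i => NCPoly.deg (gs i)) (Finset.mem_univ i)) w hwD
  have hpos : 0 < p.coeff (NCPoly.wordStar w * w) := by
    rw [hkey]
    apply Finset.sum_pos' (fun i _ => sq_nonneg _)
    have hne := Finsupp.mem_support_iff.mp hw
    exact ⟨j0, Finset.mem_univ j0, by positivity⟩
  have hmem : NCPoly.wordStar w * w ∈ p.coeff.support :=
    Finsupp.mem_support_iff.mpr (ne_of_gt hpos)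
  have : 2 * D ≤ NCPoly.deg p := by
    have := Finset.le_sup (f := fun w => (FreeMonoid.toList w).length) hmem
    simpa [NCPoly.deg, FreeMonoid.toList_mul, NCPoly.length_wordStar, hwD, two_mul] using this
  omega
end
end

section
/- There exists a linear functional λ̂ : ℝ^{ν×ν}⟨x⟩_{2δ} → ℝ that is nonnegative on the truncated quadratic module M^ν_δ = M^ν_{δ,δ−1}(I − Λ_A) and strictly positive on Σ^ν_δ \ {0}, namely λ̂(p) = Σ_{i=1}^∞ 2^{−i} tr(p(X^{(i)})) for a countable dense sequence (X^{(i)}) in the ball B_ε(δ) of g-tuples of symmetric δ×δ matrices of norm ≤ ε contained in 𝔓_{I−Λ_A}. -/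
open scoped Matrix BigOperators
noncomputable section

/-! ### Auxiliary machinery -/

section AuxEval
variable {g : ℕ}

lemma NCPoly.eval_eq {n : ℕ} (X : Fin g → Matrix (Fin n) (Fin n) ℝ) :
    NCPoly.eval X = ⇑((MonoidAlgebra.lift ℝ (Matrix (Fin n) (Fin n) ℝ) (FreeMonoid (Fin g)))
      (FreeMonoid.lift X)) := rfl

lemma NCPoly.eval_single {n : ℕ} (X : Fin g → Matrix (Fin n) (Fin n) ℝ)
    (w : FreeMonoid (Fin g)) (c : ℝ) :
    NCPoly.eval X (MonoidAlgebra.single w c) = c • FreeMonoid.lift X w := by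
  rw [NCPoly.eval_eq]; exact MonoidAlgebra.lift_single _ _ _

lemma NCPoly.eval_adj {n : ℕ} {X : Fin g → Matrix (Fin n) (Fin n) ℝ}
    (hX : ∀ j, (X j).IsSymm) (p : NCPoly g) :
    NCPoly.eval X (NCPoly.adj p) = (NCPoly.eval X p)ᵀ := by
  induction p using MonoidAlgebra.induction_linear with
  | zero => simp [NCPoly.adj, NCPoly.eval_eq]
  | add f h hf hg =>
      unfold NCPoly.adj at *
      rw [MonoidAlgebra.mapDomain_add]
      rw [NCPoly.eval_eq] at *
      simp only [map_add, hf, hg, Matrix.transpose_add]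
  | single w c =>
      unfold NCPoly.adj
      rw [MonoidAlgebra.mapDomain_single]
      rw [NCPoly.eval_single, NCPoly.eval_single, Matrix.transpose_smul]
      congr 1
      rw [FreeMonoid.lift_apply, FreeMonoid.lift_apply]
      rw [Matrix.transpose_list_prod]
      have h1 : (List.map X (FreeMonoid.toList w)).map Matrix.transpose
          = List.map X (FreeMonoid.toList w) := by
        rw [List.map_map]
        congr 1
        funext j
        exact hX j
      rw [h1]
      unfold NCPoly.wordStar
      rw [FreeMonoid.toList_ofList, List.map_reverse]

end AuxEval

section Fock
variable {g : ℕ}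

def WordsLe (g δ : ℕ) : Type := {l : List (Fin g) // l.length ≤ δ}

instance {g δ : ℕ} : DecidableEq (WordsLe g δ) := by unfold WordsLe; infer_instance

instance {g δ : ℕ} : Fintype (WordsLe g δ) := by
  apply Fintype.ofInjective (f := fun l : WordsLe g δ => fun i : Fin δ => l.1[(i : ℕ)]?)
  intro l m h
  apply Subtype.ext
  apply List.ext_getElem?
  intro n
  by_cases hn : n < δ
  · exact congrFun h ⟨n, hn⟩
  · rw [List.getElem?_eq_none (le_trans l.2 (not_lt.mp hn)),
        List.getElem?_eq_none (le_trans m.2 (not_lt.mp hn))]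

def nF (g δ : ℕ) : ℕ := Fintype.card (WordsLe g δ)

def wIdx (g δ : ℕ) : Fin (nF g δ) ≃ WordsLe g δ := (Fintype.equivFin _).symm

def fockX (g δ : ℕ) (t : ℝ) : Fin g → Matrix (Fin (nF g δ)) (Fin (nF g δ)) ℝ :=
  fun j a b => (if (wIdx g δ a).1 = j :: (wIdx g δ b).1 then t else 0)
             + (if (wIdx g δ b).1 = j :: (wIdx g δ a).1 then t else 0)

lemma fockX_isSymm (g δ : ℕ) (t : ℝ) (j : Fin g) : (fockX g δ t j).IsSymm := by
  ext a b
  simp only [Matrix.transpose_apply, fockX]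
  ring

lemma fockX_smul (g δ : ℕ) (t : ℝ) (j : Fin g) (a b : Fin (nF g δ)) :
    fockX g δ t j a b = t * fockX g δ 1 j a b := by
  simp only [fockX]
  by_cases h1 : (wIdx g δ a).1 = j :: (wIdx g δ b).1
  · rw [if_pos h1, if_pos h1]
    by_cases h2 : (wIdx g δ b).1 = j :: (wIdx g δ a).1
    · rw [if_pos h2, if_pos h2]; ring
    · rw [if_neg h2, if_neg h2]; ring
  · rw [if_neg h1, if_neg h1]
    by_cases h2 : (wIdx g δ b).1 = j :: (wIdx g δ a).1
    · rw [if_pos h2, if_pos h2]; ring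
    · rw [if_neg h2, if_neg h2]; ring

def e0 (g δ : ℕ) : Fin (nF g δ) → ℝ := fun a => if (wIdx g δ a).1 = [] then 1 else 0

lemma fock_key (δ : ℕ) (t : ℝ) :
    ∀ (l : List (Fin g)), ∀ a : Fin (nF g δ), l.length ≤ (wIdx g δ a).1.length →
      (NCPoly.eval (fockX g δ t) (MonoidAlgebra.single (FreeMonoid.ofList l) 1)).mulVec (e0 g δ) a
        = if (wIdx g δ a).1 = l then t ^ l.length else 0 := by
  intro l
  induction l with
  | nil =>
      intro a _
      have h1 : (MonoidAlgebra.single (FreeMonoid.ofList ([] : List (Fin g))) (1:ℝ)) = 1 := rfl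
      rw [h1, NCPoly.eval_eq, map_one, Matrix.one_mulVec]
      simp [e0]
  | cons j l' ih =>
      intro a ha
      have hsplit : (MonoidAlgebra.single (FreeMonoid.ofList (j :: l')) (1:ℝ))
          = MonoidAlgebra.single (FreeMonoid.of j) 1 * MonoidAlgebra.single (FreeMonoid.ofList l') 1 := by
        rw [MonoidAlgebra.single_mul_single, one_mul]
        rfl
      have hXj : NCPoly.eval (fockX g δ t) (MonoidAlgebra.single (FreeMonoid.of j) 1)
          = fockX g δ t j := by
        rw [NCPoly.eval_single, FreeMonoid.lift_eval_of, one_smul]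
      rw [hsplit, NCPoly.eval_eq, map_mul, ← NCPoly.eval_eq, hXj,
        ← Matrix.mulVec_mulVec]
      set w := (NCPoly.eval (fockX g δ t) (MonoidAlgebra.single (FreeMonoid.ofList l') 1)).mulVec (e0 g δ) with hw
      have hwb : ∀ b : Fin (nF g δ), l'.length ≤ (wIdx g δ b).1.length →
          w b = if (wIdx g δ b).1 = l' then t ^ l'.length else 0 := fun b hb => ih b hb
      have hmv : (fockX g δ t j).mulVec w a
          = ∑ b, ((if (wIdx g δ a).1 = j :: (wIdx g δ b).1 then t else 0)
             + (if (wIdx g δ b).1 = j :: (wIdx g δ a).1 then t else 0)) * w b := by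
        simp [Matrix.mulVec, dotProduct, fockX]
      rw [hmv]
      simp only [add_mul]
      rw [Finset.sum_add_distrib]
      have hlena : l'.length + 1 ≤ (wIdx g δ a).1.length := by simpa using ha
      have h2 : ∑ b, (if (wIdx g δ b).1 = j :: (wIdx g δ a).1 then t else 0) * w b = 0 := by
        apply Finset.sum_eq_zero
        intro b _
        by_cases hb : (wIdx g δ b).1 = j :: (wIdx g δ a).1
        · rw [if_pos hb]
          have hlen : l'.length ≤ (wIdx g δ b).1.length := by
            rw [hb]; simp; omega
          rw [hwb b hlen, if_neg, mul_zero]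
          intro hc
          rw [hb] at hc
          have := congrArg List.length hc
          simp at this
          omega
        · rw [if_neg hb, zero_mul]
      rw [h2, add_zero]
      cases hla : (wIdx g δ a).1 with
      | nil => exfalso; rw [hla] at hlena; simp at hlena
      | cons j0 u =>
        by_cases hj : j0 = j
        · subst hj
          have hu : u.length ≤ δ := by
            have h3 := (wIdx g δ a).2
            rw [hla] at h3
            simp at h3
            omega
          set b0 := (wIdx g δ).symm ⟨u, hu⟩ with hb0
          have hb0v : (wIdx g δ b0).1 = u := by rw [hb0]; exact congrArg Subtype.val ((wIdx g δ).apply_symm_apply _)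
          have h1 : ∀ b : Fin (nF g δ),
              (if j0 :: u = j0 :: (wIdx g δ b).1 then t else 0) * w b
              = if b = b0 then t * w b else 0 := by
            intro b
            by_cases hb : b = b0
            · subst hb
              rw [if_pos rfl, if_pos (by rw [hb0v])]
            · rw [if_neg hb, if_neg, zero_mul]
              intro hc
              apply hb
              have hceq : (wIdx g δ b).1 = u := (List.cons.injEq _ _ _ _ ▸ hc).2.symm
              have : wIdx g δ b = ⟨u, hu⟩ := Subtype.ext hceq
              rw [hb0]
              apply (wIdx g δ).injective
              rw [this]; exact ((wIdx g δ).apply_symm_apply _).symm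
          rw [Finset.sum_congr rfl (fun b _ => h1 b), Finset.sum_ite_eq' Finset.univ b0 _,
            if_pos (Finset.mem_univ _)]
          have hulen : l'.length ≤ (wIdx g δ b0).1.length := by
            rw [hb0v]
            rw [hla] at hlena
            simpa using hlena
          rw [hwb b0 hulen, hb0v]
          by_cases hu' : u = l'
          · subst hu'
            rw [if_pos rfl, if_pos rfl, List.length_cons, pow_succ]
            ring
          · rw [if_neg hu', if_neg (by simp [hu']), mul_zero]
        · have hz : ∀ b : Fin (nF g δ), (if j0 :: u = j :: (wIdx g δ b).1 then t else 0) * w b = 0 := by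
            intro b
            rw [if_neg, zero_mul]
            intro hc
            exact hj (List.cons.injEq _ _ _ _ ▸ hc).1
          rw [Finset.sum_congr rfl (fun b _ => hz b), Finset.sum_const_zero, if_neg]
          intro hc
          exact hj (List.cons.injEq _ _ _ _ ▸ hc).1

end Fock

section Inj
variable {g : ℕ}

instance freeMonoidDecEq {α : Type*} [DecidableEq α] : DecidableEq (FreeMonoid α) := fun a b =>
  decidable_of_iff (FreeMonoid.toList a = FreeMonoid.toList b)
    ⟨fun h => by rw [← FreeMonoid.ofList_toList a, ← FreeMonoid.ofList_toList b, h],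
     fun h => by rw [h]⟩

lemma sum_mulVec {n : ℕ} {ι : Type*} (s : Finset ι) (M : ι → Matrix (Fin n) (Fin n) ℝ)
    (v : Fin n → ℝ) : (∑ i ∈ s, M i).mulVec v = ∑ i ∈ s, (M i).mulVec v := by
  funext x
  simp only [Matrix.mulVec, dotProduct, Matrix.sum_apply, Finset.sum_mul,
    Finset.sum_apply]
  rw [Finset.sum_comm]

lemma fock_inj (δ : ℕ) {t : ℝ} (ht : 0 < t) (p : NCPoly g) (hdeg : NCPoly.deg p ≤ δ)
    (h : (NCPoly.eval (fockX g δ t) p).mulVec (e0 g δ) = 0) : p = 0 := by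
  by_contra hp
  have hsupp : p.coeff.support.Nonempty := Finsupp.support_nonempty_iff.mpr (mt MonoidAlgebra.coeff_eq_zero.mp hp)
  obtain ⟨w0, hw0, hsup⟩ := Finset.exists_mem_eq_sup p.coeff.support hsupp
      (fun w => (FreeMonoid.toList w).length)
  set l0 := FreeMonoid.toList w0 with hl0def
  have hdeg' : l0.length ≤ δ := by
    unfold NCPoly.deg at hdeg
    rw [hsup] at hdeg
    exact hdeg
  set a0 := (wIdx g δ).symm ⟨l0, hdeg'⟩ with ha0
  have ha0v : (wIdx g δ a0).1 = l0 := by rw [ha0]; exact congrArg Subtype.val ((wIdx g δ).apply_symm_apply _)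
  have hexp : p = ∑ w ∈ p.coeff.support, MonoidAlgebra.single w (p.coeff w) := by
    conv_lhs => rw [← MonoidAlgebra.sum_coeff_single p]
    rfl
  have hterm : ∀ w ∈ p.coeff.support,
      (NCPoly.eval (fockX g δ t) (MonoidAlgebra.single w (p.coeff w))).mulVec (e0 g δ) a0
        = if w = w0 then p.coeff w0 * t ^ l0.length else 0 := by
    intro w hw
    have hlen : (FreeMonoid.toList w).length ≤ (wIdx g δ a0).1.length := by
      rw [ha0v]
      have := Finset.le_sup (f := fun w => (FreeMonoid.toList w).length) hw
      rw [hsup] at this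
      exact this
    have hkey := fock_key δ t (FreeMonoid.toList w) a0 hlen
    have hsingle : MonoidAlgebra.single w (p.coeff w)
        = (p.coeff w) • MonoidAlgebra.single (FreeMonoid.ofList (FreeMonoid.toList w)) (1:ℝ) := by
      rw [FreeMonoid.ofList_toList, MonoidAlgebra.smul_single', mul_one]
    rw [hsingle, NCPoly.eval_eq, map_smul, Matrix.smul_mulVec, Pi.smul_apply,
      ← NCPoly.eval_eq, hkey, ha0v, smul_eq_mul]
    by_cases hww : w = w0
    · subst hww
      rw [if_pos rfl, if_pos rfl]
    · rw [if_neg hww, if_neg, mul_zero]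
      intro hc
      exact hww (by rw [← FreeMonoid.ofList_toList w, ← FreeMonoid.ofList_toList w0, ← hl0def, ← hc])
  have h0 : (NCPoly.eval (fockX g δ t) p).mulVec (e0 g δ) a0 = p.coeff w0 * t ^ l0.length := by
    conv_lhs => rw [hexp, NCPoly.eval_eq, map_sum, ← NCPoly.eval_eq]
    rw [sum_mulVec, Finset.sum_apply]
    rw [Finset.sum_congr rfl hterm, Finset.sum_ite_eq' p.coeff.support w0 _, if_pos hw0]
  rw [h, Pi.zero_apply] at h0
  have hz : p.coeff w0 = 0 := by
    have hpow : (0:ℝ) < t ^ l0.length := pow_pos ht _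
    rcases mul_eq_zero.mp h0.symm with h' | h'
    · exact h'
    · exact absurd h' (ne_of_gt hpow)
  exact (Finsupp.mem_support_iff.mp hw0) hz

end Inj

section MatAux
variable {g : ℕ}

lemma matEval_mul {I K J : Type*} [Fintype K] {n : ℕ}
    (X : Fin g → Matrix (Fin n) (Fin n) ℝ) (P : MatPoly g I K) (Q : MatPoly g K J) :
    MatPoly.eval X (P * Q) = MatPoly.eval X P * MatPoly.eval X Q := by
  funext ia jb
  obtain ⟨i, a⟩ := ia
  obtain ⟨j, b⟩ := jb
  show NCPoly.eval X ((P * Q) i j) a b = _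
  rw [Matrix.mul_apply, Matrix.mul_apply, Fintype.sum_prod_type]
  rw [NCPoly.eval_eq, map_sum]
  rw [Matrix.sum_apply]
  apply Finset.sum_congr rfl
  intro k _
  rw [map_mul, Matrix.mul_apply]
  rfl

lemma matEval_adj {I J : Type*} {n : ℕ}
    {X : Fin g → Matrix (Fin n) (Fin n) ℝ} (hX : ∀ j, (X j).IsSymm)
    (P : MatPoly g I J) :
    MatPoly.eval X (MatPoly.adj P) = (MatPoly.eval X P)ᵀ := by
  funext ia jb
  obtain ⟨i, a⟩ := ia
  obtain ⟨j, b⟩ := jb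
  show NCPoly.eval X (NCPoly.adj (P j i)) a b = NCPoly.eval X (P j i) b a
  rw [NCPoly.eval_adj hX]
  rfl

lemma matEval_pencil {ℓ n : ℕ} (X : Fin g → Matrix (Fin n) (Fin n) ℝ)
    (A : Fin g → Matrix (Fin ℓ) (Fin ℓ) ℝ) (ia jb : Fin ℓ × Fin n) :
    MatPoly.eval X (MatPoly.pencil A) ia jb
      = (1 : Matrix (Fin ℓ × Fin n) (Fin ℓ × Fin n) ℝ) ia jb
        - ∑ j' : Fin g, A j' ia.1 jb.1 * X j' ia.2 jb.2 := by
  obtain ⟨i, a⟩ := ia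
  obtain ⟨j, b⟩ := jb
  show NCPoly.eval X (MatPoly.pencil A i j) a b = _
  unfold MatPoly.pencil
  rw [Matrix.sub_apply, Matrix.sum_apply]
  rw [NCPoly.eval_eq, map_sub, map_sum]
  rw [Matrix.sub_apply, Matrix.sum_apply]
  congr 1
  · by_cases hij : i = j
    · subst hij
      rw [show ((1 : Matrix (Fin ℓ) (Fin ℓ) (NCPoly g)) i i) = 1 from Matrix.one_apply_eq i,
        map_one]
      simp [Matrix.one_apply, Prod.ext_iff]
    · rw [show ((1 : Matrix (Fin ℓ) (Fin ℓ) (NCPoly g)) i j) = 0 from Matrix.one_apply_ne hij,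
        map_zero]
      simp [Matrix.one_apply, Prod.ext_iff, hij]
  · apply Finset.sum_congr rfl
    intro j' _
    rw [Matrix.map_apply, ← NCPoly.eval_eq, NCPoly.eval_single, FreeMonoid.lift_eval_of,
      Matrix.smul_apply, smul_eq_mul]

lemma exists_small {m : Type*} [Fintype m] (C : Matrix m m ℝ) :
    ∃ t : ℝ, 0 < t ∧ ∀ x : m → ℝ, t * (x ⬝ᵥ C.mulVec x) ≤ x ⬝ᵥ x := by
  set K := ∑ p : m, ∑ q : m, |C p q| with hKdef
  have hK : 0 ≤ K := by positivity
  refine ⟨1 / (K + 1), by positivity, ?_⟩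
  intro x
  set S := x ⬝ᵥ x with hS
  have hS0 : 0 ≤ S := by
    rw [hS]
    unfold dotProduct
    exact Finset.sum_nonneg fun r _ => mul_self_nonneg (x r)
  have hsq : ∀ p : m, x p ^ 2 ≤ S := by
    intro p
    rw [hS]
    unfold dotProduct
    have h := Finset.single_le_sum (f := fun r => x r * x r)
      (fun r _ => mul_self_nonneg (x r)) (Finset.mem_univ p)
    rw [pow_two]
    simpa using h
  have hb : x ⬝ᵥ C.mulVec x ≤ K * S := by
    have hexp : x ⬝ᵥ C.mulVec x = ∑ p, ∑ q, x p * (C p q * x q) := by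
      simp [Matrix.mulVec, dotProduct, Finset.mul_sum]
    rw [hexp, hKdef, Finset.sum_mul]
    apply Finset.sum_le_sum
    intro p _
    rw [Finset.sum_mul]
    apply Finset.sum_le_sum
    intro q _
    calc x p * (C p q * x q) ≤ |x p * (C p q * x q)| := le_abs_self _
      _ = |C p q| * (|x p| * |x q|) := by rw [abs_mul, abs_mul]; ring
      _ ≤ |C p q| * S := by
          apply mul_le_mul_of_nonneg_left _ (abs_nonneg _)
          nlinarith [hsq p, hsq q, sq_abs (x p), sq_abs (x q), sq_nonneg (|x p| - |x q|)]
  rw [div_mul_eq_mul_div, div_le_iff₀ (by positivity)]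
  nlinarith [hb, hS0]

lemma trace_conj_nonneg {m k : Type*} [Fintype m] [Fintype k]
    (Q : Matrix m m ℝ) (hQ : ∀ y : m → ℝ, 0 ≤ y ⬝ᵥ Q.mulVec y)
    (F : Matrix m k ℝ) : 0 ≤ (Fᵀ * Q * F).trace := by
  have hdiag : ∀ c : k, (Fᵀ * Q * F) c c
      = (fun p => F p c) ⬝ᵥ Q.mulVec (fun p => F p c) := by
    intro c
    simp only [Matrix.mul_apply, Matrix.transpose_apply, dotProduct, Matrix.mulVec,
      Finset.sum_mul, Finset.mul_sum]
    rw [Finset.sum_comm]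
    apply Finset.sum_congr rfl
    intro p _
    apply Finset.sum_congr rfl
    intro q _
    ring
  have htr : (Fᵀ * Q * F).trace = ∑ c : k, (Fᵀ * Q * F) c c := rfl
  rw [htr]
  apply Finset.sum_nonneg
  intro c _
  rw [hdiag c]
  exact hQ _
end MatAux


section MatAux2
variable {g : ℕ}

lemma matEval_add {I J : Type*} {n : ℕ} (X : Fin g → Matrix (Fin n) (Fin n) ℝ)
    (p q : MatPoly g I J) :
    MatPoly.eval X (p + q) = MatPoly.eval X p + MatPoly.eval X q := by
  funext ia jb
  show NCPoly.eval X ((p + q) ia.1 jb.1) ia.2 jb.2 = _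
  have h1 : (p + q) ia.1 jb.1 = p ia.1 jb.1 + q ia.1 jb.1 := rfl
  rw [h1, NCPoly.eval_eq, map_add]
  rfl

lemma matEval_smul {I J : Type*} {n : ℕ} (X : Fin g → Matrix (Fin n) (Fin n) ℝ)
    (c : ℝ) (p : MatPoly g I J) :
    MatPoly.eval X (c • p) = c • MatPoly.eval X p := by
  funext ia jb
  show NCPoly.eval X ((c • p) ia.1 jb.1) ia.2 jb.2 = _
  have h1 : (c • p) ia.1 jb.1 = c • p ia.1 jb.1 := rfl
  rw [h1, NCPoly.eval_eq, map_smul]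
  rfl

lemma matEval_sum {I J : Type*} {n : ℕ} {ι : Type*} (X : Fin g → Matrix (Fin n) (Fin n) ℝ)
    (s : Finset ι) (f : ι → MatPoly g I J) :
    MatPoly.eval X (∑ i ∈ s, f i) = ∑ i ∈ s, MatPoly.eval X (f i) := by
  funext ia jb
  show NCPoly.eval X ((∑ i ∈ s, f i) ia.1 jb.1) ia.2 jb.2 = _
  rw [Matrix.sum_apply, NCPoly.eval_eq, map_sum, Matrix.sum_apply, Matrix.sum_apply]
  rfl

lemma sos_trace {n ν m' : ℕ} {X : Fin g → Matrix (Fin n) (Fin n) ℝ}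
    [NeZero 1] (hX : ∀ j, (X j).IsSymm) (v : Fin m' → Fin ν → NCPoly g) :
    (MatPoly.eval X ((fun i j => ∑ k, NCPoly.adj (v k i) * v k j) :
        MatPoly g (Fin ν) (Fin ν))).trace
      = ∑ x : Fin ν × Fin m' × Fin n × Fin n,
          (NCPoly.eval X (v x.2.1 x.1) x.2.2.1 x.2.2.2) ^ 2 := by
  have htr : (MatPoly.eval X ((fun i j => ∑ k, NCPoly.adj (v k i) * v k j) :
        MatPoly g (Fin ν) (Fin ν))).trace
      = ∑ ia : Fin ν × Fin n, NCPoly.eval X (∑ k, NCPoly.adj (v k ia.1) * v k ia.1) ia.2 ia.2 :=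
    rfl
  rw [htr, Fintype.sum_prod_type]
  rw [Fintype.sum_prod_type]
  apply Finset.sum_congr rfl
  intro i _
  have hentry : ∀ a : Fin n, NCPoly.eval X (∑ k, NCPoly.adj (v k i) * v k i) a a
      = ∑ k, ∑ c, NCPoly.eval X (v k i) c a * NCPoly.eval X (v k i) c a := by
    intro a
    rw [NCPoly.eval_eq, map_sum, Matrix.sum_apply]
    apply Finset.sum_congr rfl
    intro k _
    rw [map_mul, Matrix.mul_apply]
    apply Finset.sum_congr rfl
    intro c _
    rw [← NCPoly.eval_eq, NCPoly.eval_adj hX]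
    rfl
  rw [Finset.sum_congr rfl (fun a _ => hentry a)]
  rw [Finset.sum_comm]
  rw [Fintype.sum_prod_type]
  apply Finset.sum_congr rfl
  intro k _
  rw [Fintype.sum_prod_type]
  rw [Finset.sum_comm]
  apply Finset.sum_congr rfl
  intro c _
  apply Finset.sum_congr rfl
  intro a _
  rw [pow_two]

end MatAux2

/-- existence of a linear functional on matrix polynomials which is
nonnegative on `M^ν_{d+1,d}(I - Λ_A)` and strictly positive on nonzero sums of
hermitian squares of degree at most `d+1`. -/
theorem stmt7 {g ℓ ν d : ℕ} (A : Fin g → Matrix (Fin ℓ) (Fin ℓ) ℝ)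
    (hA : ∀ j, (A j).IsSymm) :
    ∃ lam : MatPoly g (Fin ν) (Fin ν) →ₗ[ℝ] ℝ,
      (∀ p, MatPoly.InM (d + 1) d (MatPoly.pencil A) p → 0 ≤ lam p) ∧
      (∀ p, MatPoly.InSigma (d + 1) p → p ≠ 0 → 0 < lam p) := by
  classical
  set C : Matrix (Fin ℓ × Fin (nF g (d+1))) (Fin ℓ × Fin (nF g (d+1))) ℝ :=
    fun pq rs => ∑ j' : Fin g, A j' pq.1 rs.1 * fockX g (d+1) 1 j' pq.2 rs.2 with hCdef
  obtain ⟨t, ht, htC⟩ := exists_small C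
  set X := fockX g (d+1) t with hXdef
  have hXsym : ∀ j, (X j).IsSymm := fun j => fockX_isSymm g (d+1) t j
  have hq : ∀ y, 0 ≤ y ⬝ᵥ (MatPoly.eval X (MatPoly.pencil A)).mulVec y := by
    intro y
    have he : MatPoly.eval X (MatPoly.pencil A) = 1 - t • C := by
      funext ia jb
      rw [matEval_pencil]
      have h2 : (1 - t • C) ia jb = (1 : Matrix _ _ ℝ) ia jb - t * C ia jb := rfl
      rw [h2]
      congr 1
      rw [hCdef]
      simp only
      rw [Finset.mul_sum]
      apply Finset.sum_congr rfl
      intro j' _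
      rw [hXdef, fockX_smul]
      ring
    rw [he, Matrix.sub_mulVec, Matrix.one_mulVec, dotProduct_sub]
    have h3 : y ⬝ᵥ (t • C).mulVec y = t * (y ⬝ᵥ C.mulVec y) := by
      rw [Matrix.smul_mulVec, dotProduct_smul, smul_eq_mul]
    rw [h3]
    linarith [htC y]
  refine ⟨{ toFun := fun p => (MatPoly.eval X p).trace
            map_add' := fun p q => by
              show (MatPoly.eval X (p + q)).trace = _
              rw [matEval_add, Matrix.trace_add]
            map_smul' := fun c p => by
              show (MatPoly.eval X (c • p)).trace = _
              rw [matEval_smul, Matrix.trace_smul]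
              rfl }, ?_, ?_⟩
  · rintro p ⟨σ, m, f, hσ, hdegf, hpeq⟩
    show 0 ≤ (MatPoly.eval X p).trace
    rw [hpeq, matEval_add, Matrix.trace_add]
    apply add_nonneg
    · obtain ⟨m', v, hdegv, hσeq⟩ := hσ
      rw [hσeq, sos_trace hXsym]
      positivity
    · rw [matEval_sum, Matrix.trace_sum]
      apply Finset.sum_nonneg
      intro k _
      have h4 : MatPoly.eval X (MatPoly.adj (f k) * MatPoly.pencil A * f k)
          = (MatPoly.eval X (f k))ᵀ * MatPoly.eval X (MatPoly.pencil A)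
              * MatPoly.eval X (f k) := by
        rw [matEval_mul, matEval_mul, matEval_adj hXsym]
      rw [h4]
      exact trace_conj_nonneg _ hq _
  · rintro p ⟨m', v, hdegv, hpeq⟩ hp0
    show 0 < (MatPoly.eval X p).trace
    have htrace : (MatPoly.eval X p).trace
        = ∑ x : Fin ν × Fin m' × Fin (nF g (d+1)) × Fin (nF g (d+1)),
            (NCPoly.eval X (v x.2.1 x.1) x.2.2.1 x.2.2.2) ^ 2 := by
      rw [hpeq, sos_trace hXsym]
    rw [htrace]
    have hnn : ∀ x ∈ (Finset.univ : Finset (Fin ν × Fin m' × Fin (nF g (d+1)) × Fin (nF g (d+1)))),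
        (0:ℝ) ≤ (NCPoly.eval X (v x.2.1 x.1) x.2.2.1 x.2.2.2) ^ 2 :=
      fun x _ => sq_nonneg _
    rcases (Finset.sum_nonneg hnn).lt_or_eq with h | h
    · exact h
    · exfalso
      have hall := (Finset.sum_eq_zero_iff_of_nonneg hnn).mp h.symm
      have hv : ∀ k i, v k i = 0 := by
        intro k i
        apply fock_inj (d+1) ht (v k i) (hdegv k i)
        have hE : NCPoly.eval X (v k i) = 0 := by
          funext c a
          have := hall (i, k, c, a) (Finset.mem_univ _)
          have h5 := pow_eq_zero_iff (n := 2) (by norm_num) |>.mp this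
          exact h5
        rw [← hXdef, hE, Matrix.zero_mulVec]
      apply hp0
      rw [hpeq]
      funext i j
      show ∑ k, NCPoly.adj (v k i) * v k j = 0
      apply Finset.sum_eq_zero
      intro k _
      rw [hv k j, mul_zero]
end
end
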